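/- Let n ≥ 1, k ≥ 1, j ≥ 1, let v_1, …, v_j ∈ ℤⁿ be nonzero integer vectors, let d_1, …, d_j be positive integers, and let p_1, …, p_j ∈ ℂ[z] be monic polynomials of degree k with p_i(0) ≠ 0 for all i. In the Laurent polynomial ring ℂ[t_1^{±1}, …, t_n^{±1}], write t^v for the monomial with exponent vector v ∈ ℤⁿ, and set Δ = ∏_{i=1}^{j} (t^{v_i} − 1)^{d_i} and Δ^φ = ∏_{i=1}^{j} p_i(t^{v_i})^{d_i}. Then, regarding the supports (sets of exponent vectors with nonzero coefficient) as subsets of ℝⁿ, the convex hull of the support of Δ^φ equals k times the convex hull of the support of Δ: conv(supp Δ^φ) = k · conv(supp Δ). In particular, both convex hulls are the zonotopes determined by the matrices with columns k·d_i·v_i and d_i·v_i, respectively. -/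

import Mathlib

open scoped Pointwise

/-- The Laurent polynomial ring in `n` variables over `ℂ`. -/
abbrev LaurentRing3 (n : ℕ) := AddMonoidAlgebra ℂ (Fin n → ℤ)

/-- The coordinatewise cast `ℤⁿ → ℝⁿ`, as an additive monoid hom. -/
noncomputable def castR (n : ℕ) : (Fin n → ℤ) →+ (Fin n → ℝ) where
  toFun w i := (w i : ℝ)
  map_zero' := by ext i; simp
  map_add' a b := by ext i; simp

lemma castR_inj (n : ℕ) : Function.Injective (castR n) := by
  intro a b h
  funext i
  have h2 : ((a i : ℝ)) = b i := congrFun h i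
  exact_mod_cast h2

/-- The Newton polytope of a Laurent polynomial. -/
noncomputable def NP {n : ℕ} (f : LaurentRing3 n) : Set (Fin n → ℝ) :=
  convexHull ℝ ((castR n) '' ↑f.coeff.support)

/-- Newton polytopes are additive under multiplication (Ostrowski's lemma). -/
lemma NP_mul' {n : ℕ} (f g : LaurentRing3 n) :
    NP (f * g) = NP f + NP g := by
  classical
  set A : Set (Fin n → ℝ) := (castR n) '' ↑f.coeff.support with hA
  set B : Set (Fin n → ℝ) := (castR n) '' ↑g.coeff.support with hB
  have hAfin : A.Finite := f.coeff.support.finite_toSet.image _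
  have hBfin : B.Finite := g.coeff.support.finite_toSet.image _
  apply Set.Subset.antisymm
  · -- easy inclusion
    have h1 : ((f * g).coeff.support : Set (Fin n → ℤ)) ⊆ ↑f.coeff.support + ↑g.coeff.support := by
      intro x hx
      have := AddMonoidAlgebra.support_coeff_mul_subset f g hx
      rw [← Finset.coe_add]
      exact_mod_cast this
    calc NP (f * g) ⊆ convexHull ℝ ((castR n) '' (↑f.coeff.support + ↑g.coeff.support)) :=
          convexHull_mono (Set.image_mono h1)
      _ = convexHull ℝ (A + B) := by rw [Set.image_add]
      _ = convexHull ℝ A + convexHull ℝ B := convexHull_add _ _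
  · -- hard inclusion
    set K : Set (Fin n → ℝ) := convexHull ℝ A + convexHull ℝ B with hK
    have hKcomp : IsCompact K :=
      (hAfin.isCompact_convexHull ℝ).add (hBfin.isCompact_convexHull ℝ)
    have hKconv : Convex ℝ K :=
      (convex_convexHull ℝ A).add (convex_convexHull ℝ B)
    have hext : K.extremePoints ℝ ⊆ (castR n) '' ↑(f * g).coeff.support := by
      rintro x hx
      obtain ⟨hxK, hxe⟩ := hx
      replace hxe : ∀ ⦃x₁⦄, x₁ ∈ K → ∀ ⦃x₂⦄, x₂ ∈ K → x ∈ openSegment ℝ x₁ x₂ → x₁ = x ∧ x₂ = x :=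
        fun x₁ h₁ x₂ h₂ hs => (mem_extremePoints.mp ⟨hxK, hxe⟩).2 x₁ h₁ x₂ h₂ hs
      obtain ⟨a, ha, b, hb, rfl⟩ := hxK
      -- uniqueness of decompositions of the extreme point `a + b`
      have huniq : ∀ a' ∈ convexHull ℝ A, ∀ b' ∈ convexHull ℝ B,
          a' + b' = a + b → a' = a ∧ b' = b := by
        intro a' ha' b' hb' habs
        have h1 : a + b' ∈ K := ⟨a, ha, b', hb', rfl⟩
        have h2 : a' + b ∈ K := ⟨a', ha', b, hb, rfl⟩
        have hseg : a + b ∈ openSegment ℝ (a + b') (a' + b) := by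
          refine ⟨1/2, 1/2, by norm_num, by norm_num, by norm_num, ?_⟩
          linear_combination (norm := module) (1/2 : ℝ) • habs
        obtain ⟨e1, e2⟩ := hxe h1 h2 hseg
        exact ⟨add_right_cancel e2, add_left_cancel e1⟩
      -- `a` is an extreme point of `convexHull A`
      have haex : a ∈ (convexHull ℝ A).extremePoints ℝ := by
        refine ⟨ha, fun x1 h1 x2 h2 hseg => ?_⟩
        obtain ⟨c1, c2, hc1, hc2, hc12, hcs⟩ := hseg
        have hab : a + b ∈ openSegment ℝ (x1 + b) (x2 + b) := by
          refine ⟨c1, c2, hc1, hc2, hc12, ?_⟩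
          rw [smul_add, smul_add,
            show c1 • x1 + c1 • b + (c2 • x2 + c2 • b)
              = (c1 • x1 + c2 • x2) + (c1 + c2) • b by rw [add_smul]; abel,
            hcs, hc12, one_smul]
        have := hxe ⟨x1, h1, b, hb, rfl⟩ ⟨x2, h2, b, hb, rfl⟩ hab
        exact add_right_cancel this.1
      -- `b` is an extreme point of `convexHull B`
      have hbex : b ∈ (convexHull ℝ B).extremePoints ℝ := by
        refine ⟨hb, fun x1 h1 x2 h2 hseg => ?_⟩
        obtain ⟨c1, c2, hc1, hc2, hc12, hcs⟩ := hseg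
        have hab : a + b ∈ openSegment ℝ (a + x1) (a + x2) := by
          refine ⟨c1, c2, hc1, hc2, hc12, ?_⟩
          rw [smul_add, smul_add,
            show c1 • a + c1 • x1 + (c2 • a + c2 • x2)
              = (c1 + c2) • a + (c1 • x1 + c2 • x2) by rw [add_smul]; abel,
            hcs, hc12, one_smul]
        have := hxe ⟨a, ha, x1, h1, rfl⟩ ⟨a, ha, x2, h2, rfl⟩ hab
        exact add_left_cancel this.1
      have haA : a ∈ A := extremePoints_convexHull_subset haex
      have hbB : b ∈ B := extremePoints_convexHull_subset hbex
      obtain ⟨A0, hA0, rfl⟩ := haA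
      obtain ⟨B0, hB0, rfl⟩ := hbB
      rw [Finset.mem_coe] at hA0 hB0
      have key : ∀ a₁ ∈ f.coeff.support, ∀ a₂ ∈ g.coeff.support, a₁ + a₂ = A0 + B0 →
          a₁ = A0 ∧ a₂ = B0 := by
        intro a₁ h₁ a₂ h₂ hsum
        have m1 : castR n a₁ ∈ convexHull ℝ A :=
          subset_convexHull ℝ A ⟨a₁, Finset.mem_coe.mpr h₁, rfl⟩
        have m2 : castR n a₂ ∈ convexHull ℝ B :=
          subset_convexHull ℝ B ⟨a₂, Finset.mem_coe.mpr h₂, rfl⟩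
        have e : castR n a₁ + castR n a₂ = castR n A0 + castR n B0 := by
          rw [← map_add, ← map_add, hsum]
        obtain ⟨ea, eb⟩ := huniq _ m1 _ m2 e
        exact ⟨castR_inj n ea, castR_inj n eb⟩
      have hcoeff : (f * g).coeff (A0 + B0) = f.coeff A0 * g.coeff B0 := by
        rw [AddMonoidAlgebra.mul_apply]
        simp only [Finsupp.sum]
        rw [Finset.sum_eq_single_of_mem A0 hA0 ?side1]
        case side1 =>
          intro a₁ h₁ hne
          apply Finset.sum_eq_zero
          intro a₂ h₂
          rw [if_neg]
          intro hc
          exact hne (key a₁ h₁ a₂ h₂ hc).1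
        rw [Finset.sum_eq_single_of_mem B0 hB0 ?side2]
        case side2 =>
          intro a₂ h₂ hne
          rw [if_neg]
          intro hc
          exact hne (add_left_cancel hc)
        rw [if_pos rfl]
      refine ⟨A0 + B0, ?_, by exact map_add (castR n) A0 B0⟩
      rw [Finset.mem_coe, Finsupp.mem_support_iff, hcoeff]
      exact mul_ne_zero (Finsupp.mem_support_iff.mp hA0) (Finsupp.mem_support_iff.mp hB0)
    have hclosed : IsClosed (NP (f * g)) :=
      ((((f*g).coeff.support.finite_toSet.image (castR n))).isCompact_convexHull ℝ).isClosed
    calc K = closure (convexHull ℝ (K.extremePoints ℝ)) :=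
          (closure_convexHull_extremePoints hKcomp hKconv).symm
      _ ⊆ closure (convexHull ℝ ((castR n) '' ↑(f * g).coeff.support)) :=
          closure_mono (convexHull_min (hext.trans (subset_convexHull ℝ _))
            (convex_convexHull ℝ _))
      _ = NP (f * g) := by rw [NP]; exact hclosed.closure_eq

lemma NP_one {n : ℕ} : NP (1 : LaurentRing3 n) = 0 := by
  rw [NP, AddMonoidAlgebra.one_def, AddMonoidAlgebra.coeff_single, Finsupp.support_single_ne_zero 0 one_ne_zero]
  simp only [Finset.coe_singleton, Set.image_singleton, map_zero, convexHull_singleton]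
  exact Set.singleton_zero

lemma NP_prod {n : ℕ} {ι : Type*} (s : Finset ι) (F : ι → LaurentRing3 n) :
    NP (∏ i ∈ s, F i) = ∑ i ∈ s, NP (F i) := by
  classical
  induction s using Finset.cons_induction with
  | empty => simpa using NP_one
  | cons i s hi ih => rw [Finset.prod_cons, Finset.sum_cons, NP_mul', ih]

lemma smul_hullpair {n : ℕ} (c : ℝ) (x : Fin n → ℝ) :
    c • convexHull ℝ ({0, x} : Set (Fin n → ℝ)) = convexHull ℝ ({0, c • x} : Set (Fin n → ℝ)) := by
  rw [← convexHull_smul]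
  congr 1
  rw [Set.smul_set_insert, Set.smul_set_singleton, smul_zero]

lemma hullpair_add {n : ℕ} (a b : ℝ) (ha : 0 ≤ a) (hb : 0 ≤ b) (u : Fin n → ℝ) :
    convexHull ℝ ({0, a • u} : Set (Fin n → ℝ)) + convexHull ℝ ({0, b • u} : Set (Fin n → ℝ))
      = convexHull ℝ ({0, (a + b) • u} : Set (Fin n → ℝ)) := by
  rw [← smul_hullpair a u, ← smul_hullpair b u, ← smul_hullpair (a + b) u]
  exact ((convex_convexHull ℝ _).add_smul ha hb).symm

lemma hull_nsmul {n : ℕ} (d : ℕ) (a : ℝ) (ha : 0 ≤ a) (u : Fin n → ℝ) :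
    ∑ _m ∈ Finset.range d, convexHull ℝ ({0, a • u} : Set (Fin n → ℝ))
      = convexHull ℝ ({0, ((d : ℝ) * a) • u} : Set (Fin n → ℝ)) := by
  induction d with
  | zero =>
      simp only [Finset.range_zero, Finset.sum_empty, Nat.cast_zero, zero_mul, zero_smul,
        Set.pair_eq_singleton, convexHull_singleton]
      exact Set.singleton_zero.symm
  | succ d ih =>
      rw [Finset.sum_range_succ, ih, hullpair_add ((d:ℝ)*a) a (by positivity) ha]
      congr 2
      push_cast
      ring

lemma support_sub_one {n : ℕ} (v : Fin n → ℤ) (hv : v ≠ 0) :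
    ((AddMonoidAlgebra.single v (1 : ℂ) : LaurentRing3 n) - 1).coeff.support = {v, 0} := by
  classical
  ext w
  rw [Finsupp.mem_support_iff]
  have h1 : (1 : LaurentRing3 n) = AddMonoidAlgebra.single 0 1 := AddMonoidAlgebra.one_def
  rw [h1, AddMonoidAlgebra.coeff_sub, AddMonoidAlgebra.coeff_single, AddMonoidAlgebra.coeff_single, Finsupp.sub_apply, Finsupp.single_apply, Finsupp.single_apply]
  rcases eq_or_ne w v with rfl | hwv
  · simp [Ne.symm hv]
  · rcases eq_or_ne w 0 with rfl | hw0
    · simp [hv, sub_eq_zero]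
    · simp [Ne.symm hwv, Ne.symm hw0, hwv, hw0]

lemma NP_sub_one {n : ℕ} (v : Fin n → ℤ) (hv : v ≠ 0) :
    NP ((AddMonoidAlgebra.single v (1 : ℂ) : LaurentRing3 n) - 1)
      = convexHull ℝ ({0, (1:ℝ) • castR n v} : Set (Fin n → ℝ)) := by
  rw [NP, support_sub_one v hv, one_smul]
  congr 1
  rw [Finset.coe_insert, Finset.coe_singleton, Set.image_insert_eq, Set.image_singleton,
    map_zero, Set.pair_comm]

lemma NP_aeval {n k : ℕ} (hk : 1 ≤ k) (v : Fin n → ℤ) (hv : v ≠ 0) (p : Polynomial ℂ)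
    (hmonic : p.Monic) (hdeg : p.natDegree = k) (h0 : p.eval 0 ≠ 0) :
    NP (Polynomial.aeval (AddMonoidAlgebra.single v (1 : ℂ) : LaurentRing3 n) p)
      = convexHull ℝ ({0, (k:ℝ) • castR n v} : Set (Fin n → ℝ)) := by
  classical
  set q : LaurentRing3 n := Polynomial.aeval (AddMonoidAlgebra.single v (1 : ℂ)) p with hqdef
  obtain ⟨i₀, hi₀⟩ : ∃ i, v i ≠ 0 := Function.ne_iff.mp hv
  have minj : ∀ {m m' : ℕ}, m • v = m' • v → m = m' := by
    intro m m' h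
    have h2 : (m : ℤ) * v i₀ = (m' : ℤ) * v i₀ := by
      have := congrFun h i₀
      simpa [nsmul_eq_mul] using this
    exact_mod_cast mul_right_cancel₀ hi₀ h2
  have hlt : p.natDegree < k + 1 := by rw [hdeg]; omega
  have hq_repr : q = ∑ m ∈ Finset.range (k+1),
      AddMonoidAlgebra.single (m • v) (p.coeff m) := by
    rw [hqdef, Polynomial.aeval_eq_sum_range' hlt]
    refine Finset.sum_congr rfl fun m _ => ?_
    rw [AddMonoidAlgebra.single_pow, one_pow, AddMonoidAlgebra.smul_single, smul_eq_mul, mul_one]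
  have hq_apply : ∀ m : ℕ, m ≤ k → q.coeff (m • v) = p.coeff m := by
    intro m hm
    rw [hq_repr, AddMonoidAlgebra.coeff_sum, Finsupp.finset_sum_apply]
    rw [Finset.sum_eq_single_of_mem m (Finset.mem_range.mpr (by omega))]
    · rw [AddMonoidAlgebra.coeff_single, Finsupp.single_apply, if_pos rfl]
    · intro m' _ hne
      rw [AddMonoidAlgebra.coeff_single, Finsupp.single_apply, if_neg]
      intro hc
      exact hne (minj hc)
  have hk0 : (k : ℝ) ≠ 0 := by positivity
  apply Set.Subset.antisymm
  · refine convexHull_min ?_ (convex_convexHull ℝ _)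
    rintro x ⟨w, hw, rfl⟩
    rw [Finset.mem_coe, Finsupp.mem_support_iff] at hw
    obtain ⟨m, hm, rfl⟩ : ∃ m : ℕ, m ≤ k ∧ w = m • v := by
      rw [hq_repr, AddMonoidAlgebra.coeff_sum, Finsupp.finset_sum_apply] at hw
      obtain ⟨m, hm, hne⟩ := Finset.exists_ne_zero_of_sum_ne_zero hw
      have hw' : w = m • v := by
        by_contra hc
        exact hne (Finsupp.single_eq_of_ne' fun h => hc h.symm)
      exact ⟨m, Nat.lt_succ_iff.mp (Finset.mem_range.mp hm), hw'⟩
    rw [convexHull_pair]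
    refine ⟨1 - (m:ℝ)/k, (m:ℝ)/k, ?_, by positivity, by ring, ?_⟩
    · have h1 : (m:ℝ)/k ≤ 1 := by
        rw [div_le_one (by positivity)]
        exact_mod_cast hm
      linarith
    · rw [smul_zero, zero_add, smul_smul, div_mul_cancel₀ _ hk0, map_nsmul,
        Nat.cast_smul_eq_nsmul]
  · refine convexHull_mono ?_
    intro x hx
    rcases hx with rfl | hx
    · refine ⟨0, ?_, map_zero _⟩
      rw [Finset.mem_coe, Finsupp.mem_support_iff]
      have h00 : q.coeff 0 = p.coeff 0 := by simpa using hq_apply 0 (by omega)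
      rw [h00, Polynomial.coeff_zero_eq_eval_zero]
      exact h0
    · rw [Set.mem_singleton_iff] at hx
      subst hx
      refine ⟨k • v, ?_, ?_⟩
      · rw [Finset.mem_coe, Finsupp.mem_support_iff, hq_apply k le_rfl]
        have hck : p.coeff k = 1 := by
          have := hmonic.leadingCoeff
          rwa [Polynomial.leadingCoeff, hdeg] at this
        rw [hck]; exact one_ne_zero
      · rw [map_nsmul]
        exact (Nat.cast_smul_eq_nsmul ℝ k (castR n v)).symm

/-- Let `n, k, j ≥ 1`, let `v₁,…,v_j ∈ ℤⁿ` be nonzero, `d₁,…,d_j > 0`,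
and let `p₁,…,p_j ∈ ℂ[z]` be monic of degree `k` with `pᵢ(0) ≠ 0`.  Set
`Δ = ∏ᵢ (t^{vᵢ} − 1)^{dᵢ}` and `Δ^φ = ∏ᵢ pᵢ(t^{vᵢ})^{dᵢ}` in `ℂ[t₁^{±1},…,tₙ^{±1}]`.
Then the Newton polytope (convex hull in `ℝⁿ` of the support) of `Δ^φ` equals `k` times
that of `Δ`. -/
theorem boundary_manifold_stmt3
    (n k j : ℕ) (hn : 1 ≤ n) (hk : 1 ≤ k) (hj : 1 ≤ j)
    (v : Fin j → (Fin n → ℤ)) (hv : ∀ i, v i ≠ 0)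
    (d : Fin j → ℕ) (hd : ∀ i, 0 < d i)
    (p : Fin j → Polynomial ℂ)
    (hmonic : ∀ i, (p i).Monic)
    (hdeg : ∀ i, (p i).natDegree = k)
    (h0 : ∀ i, (p i).eval 0 ≠ 0) :
    convexHull ℝ
      ((fun (w : Fin n → ℤ) (i : Fin n) => (w i : ℝ)) ''
        ↑(∏ i : Fin j,
          (Polynomial.aeval
            (AddMonoidAlgebra.single (v i) (1 : ℂ) : LaurentRing3 n) (p i)) ^ d i).coeff.support)
    = (k : ℝ) • convexHull ℝ
      ((fun (w : Fin n → ℤ) (i : Fin n) => (w i : ℝ)) ''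
        ↑(∏ i : Fin j,
          ((AddMonoidAlgebra.single (v i) (1 : ℂ) : LaurentRing3 n) - 1) ^ d i).coeff.support) := by
  classical
  show NP (∏ i : Fin j,
      (Polynomial.aeval
        (AddMonoidAlgebra.single (v i) (1 : ℂ) : LaurentRing3 n) (p i)) ^ d i)
    = (k : ℝ) • NP (∏ i : Fin j,
      ((AddMonoidAlgebra.single (v i) (1 : ℂ) : LaurentRing3 n) - 1) ^ d i)
  rw [NP_prod, NP_prod, Finset.smul_sum]
  refine Finset.sum_congr rfl fun i _ => ?_
  have hpow : ∀ (F : LaurentRing3 n), F ^ d i = ∏ _m ∈ Finset.range (d i), F := by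
    intro F
    rw [Finset.prod_const, Finset.card_range]
  rw [hpow, hpow, NP_prod, NP_prod]
  simp_rw [NP_aeval hk (v i) (hv i) (p i) (hmonic i) (hdeg i) (h0 i),
    NP_sub_one (v i) (hv i)]
  rw [hull_nsmul (d i) (k:ℝ) (by positivity) (castR n (v i)),
    hull_nsmul (d i) (1:ℝ) (by norm_num) (castR n (v i)),
    smul_hullpair]
  congr 2
  rw [smul_smul]
  ring
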